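/- Let B1 and B2 be positive integers with B1 ≤ B2, and let e0 be an integer with |e0| ≤ B1. Let f : ℤ → ℚ be the probability mass function of the uniform distribution on the integer interval [-B2, B2], i.e., f z = 1/(2*B2+1) if -B2 ≤ z ≤ B2 and f z = 0 otherwise. Then the statistical distance between f and its translate by e0, namely (1/2) * ∑_{z ∈ Finset.Icc (-B2-B1) (B2+B1)} |f z - f (z - e0)|, is at most B1 / (2*B2 + 1). -/

import Mathlib

/-- Smudging Noise Lemma: the statistical distance between the uniform
distribution on the integer interval `[-B2, B2]` and its translate by a
fixed `e0` with `|e0| ≤ B1` is at most `B1 / (2*B2 + 1)`. -/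
theorem smudging_noise
    (B1 B2 : ℤ) (hB1 : 0 < B1) (hB2 : 0 < B2) (hB12 : B1 ≤ B2)
    (e0 : ℤ) (he0 : |e0| ≤ B1)
    (f : ℤ → ℚ)
    (hf : ∀ z : ℤ, f z = if -B2 ≤ z ∧ z ≤ B2 then 1 / (2 * (B2 : ℚ) + 1) else 0) :
    (1 / 2 : ℚ) * ∑ z ∈ Finset.Icc (-B2 - B1) (B2 + B1), |f z - f (z - e0)|
      ≤ (B1 : ℚ) / (2 * (B2 : ℚ) + 1) := by
  obtain ⟨he1, he2⟩ : -B1 ≤ e0 ∧ e0 ≤ B1 := abs_le.mp he0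
  set c : ℚ := 1 / (2 * (B2 : ℚ) + 1) with hc_def
  have hB2Q : (0 : ℚ) < 2 * (B2 : ℚ) + 1 := by
    have : (0 : ℚ) < (B2 : ℚ) := by exact_mod_cast hB2
    linarith
  have hc : 0 ≤ c := by positivity
  have main : ∀ a1 b1 a2 b2 : ℤ,
      (∀ z : ℤ, |f z - f (z - e0)| ≤
        (if a1 ≤ z ∧ z ≤ b1 then c else 0) + (if a2 ≤ z ∧ z ≤ b2 then c else 0)) →
      -B2 - B1 ≤ a1 → b1 ≤ B2 + B1 → -B2 - B1 ≤ a2 → b2 ≤ B2 + B1 →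
      b1 + 1 - a1 ≤ B1 → b2 + 1 - a2 ≤ B1 →
      (1 / 2 : ℚ) * ∑ z ∈ Finset.Icc (-B2 - B1) (B2 + B1), |f z - f (z - e0)|
        ≤ (B1 : ℚ) / (2 * (B2 : ℚ) + 1) := by
    intro a1 b1 a2 b2 key ha1 hb1 ha2 hb2 hcard1 hcard2
    calc (1 / 2 : ℚ) * ∑ z ∈ Finset.Icc (-B2 - B1) (B2 + B1), |f z - f (z - e0)|
        ≤ (1 / 2 : ℚ) * ∑ z ∈ Finset.Icc (-B2 - B1) (B2 + B1),
            ((if a1 ≤ z ∧ z ≤ b1 then c else 0) + (if a2 ≤ z ∧ z ≤ b2 then c else 0)) := by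
          apply mul_le_mul_of_nonneg_left (Finset.sum_le_sum fun z _ => key z) (by norm_num)
      _ ≤ (B1 : ℚ) / (2 * (B2 : ℚ) + 1) := by
          rw [Finset.sum_add_distrib]
          simp only [← Finset.mem_Icc]
          rw [Finset.sum_ite_mem, Finset.sum_ite_mem,
            Finset.inter_eq_right.mpr (Finset.Icc_subset_Icc ha1 hb1),
            Finset.inter_eq_right.mpr (Finset.Icc_subset_Icc ha2 hb2),
            Finset.sum_const, Finset.sum_const, Int.card_Icc, Int.card_Icc,
            nsmul_eq_mul, nsmul_eq_mul]
          have k1 : ((b1 + 1 - a1).toNat : ℚ) ≤ (B1 : ℚ) := by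
            have : ((b1 + 1 - a1).toNat : ℤ) ≤ B1 := by omega
            exact_mod_cast this
          have k2 : ((b2 + 1 - a2).toNat : ℚ) ≤ (B1 : ℚ) := by
            have : ((b2 + 1 - a2).toNat : ℤ) ≤ B1 := by omega
            exact_mod_cast this
          have n1 : (0:ℚ) ≤ ((b1 + 1 - a1).toNat : ℚ) := Nat.cast_nonneg _
          have n2 : (0:ℚ) ≤ ((b2 + 1 - a2).toNat : ℚ) := Nat.cast_nonneg _
          rw [hc_def, div_eq_mul_one_div (B1 : ℚ)]
          nlinarith [hc, k1, k2, n1, n2]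
  rcases le_or_gt 0 e0 with hpos | hneg
  · apply main (-B2) (-B2 + e0 - 1) (B2 + 1) (B2 + e0) _
      (by omega) (by omega) (by omega) (by omega) (by omega) (by omega)
    intro z
    rw [hf z, hf (z - e0)]
    split_ifs <;>
      first
        | (exfalso; omega)
        | simp_all only [sub_self, abs_zero, sub_zero, zero_sub, abs_neg,
            abs_of_nonneg hc, abs_of_nonneg (one_div_nonneg.mpr hB2Q.le), add_zero, zero_add, le_refl, le_add_iff_nonneg_right]
  · apply main (-B2 + e0) (-B2 - 1) (B2 + e0 + 1) B2 _
      (by omega) (by omega) (by omega) (by omega) (by omega) (by omega)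
    intro z
    rw [hf z, hf (z - e0)]
    split_ifs <;>
      first
        | (exfalso; omega)
        | simp_all only [sub_self, abs_zero, sub_zero, zero_sub, abs_neg,
            abs_of_nonneg hc, abs_of_nonneg (one_div_nonneg.mpr hB2Q.le), add_zero, zero_add, le_refl, le_add_iff_nonneg_right]
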